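/- Let s ≥ 2 be an integer and let g : ℝ → ℝ satisfy: for every admissible digit sequence a, g(∑_{n=0}^∞ a n / s^{n+1}) = ∑_{n=0}^∞ (−1)^{n+1} a n / s^{n+1}. Then the image g '' [0,1) is contained in the interval [−s/(s+1), 1/(s+1)], and the complement [−s/(s+1), 1/(s+1)] \ (g '' [0,1)) is a countable set. (Paper's Lemma 3, first property, for the function f₊: f₊ maps [0,1) onto the interval [−s/(s+1), 1/(s+1)] with at most a countable set of points omitted.) -/

import Mathlib

lemma hs1 (s : ℕ) (hs : 2 ≤ s) : (1:ℝ) < s := by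
  exact_mod_cast lt_of_lt_of_le one_lt_two (by exact_mod_cast hs)

lemma hr (s : ℕ) (hs : 2 ≤ s) : (1:ℝ)/s < 1 := by
  rw [div_lt_one (lt_trans one_pos (hs1 s hs))]; exact hs1 s hs

lemma term_eq (s : ℕ) (hs : 2 ≤ s) (c : ℝ) (n : ℕ) :
    c/(s:ℝ)^(n+1) = (c/s) * (1/s)^n := by
  rw [div_pow, one_pow, div_mul_div_comm, mul_one, ← pow_succ']

lemma geom_one (s : ℕ) (hs : 2 ≤ s) : ∑' n:ℕ, ((s:ℝ)-1)/s^(n+1) = 1 := by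
  have h1 := hs1 s hs
  have hpos : (0:ℝ) < s := lt_trans one_pos h1
  rw [tsum_congr (term_eq s hs ((s:ℝ)-1)), tsum_mul_left,
    tsum_geometric_of_lt_one (by positivity) (hr s hs)]
  have e1 : (1:ℝ) - 1/s = ((s:ℝ)-1)/s := by field_simp
  rw [e1, mul_inv_cancel₀]
  apply div_ne_zero <;> [linarith; linarith]

lemma summable_digits (s : ℕ) (hs : 2 ≤ s) (b : ℕ → ℕ) (hb : ∀ n, (b n:ℝ) ≤ (s:ℝ)-1) :
    Summable (fun n => (b n:ℝ)/s^(n+1)) := by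
  have h1 := hs1 s hs
  have hpos : (0:ℝ) < s := lt_trans one_pos h1
  have hg : Summable (fun n:ℕ => (((s:ℝ)-1)/s) * (1/s)^n) :=
    (summable_geometric_of_lt_one (by positivity) (hr s hs)).mul_left _
  refine hg.of_nonneg_of_le (fun n => by positivity) (fun n => ?_)
  rw [← term_eq s hs]
  exact (div_le_div_iff_of_pos_right (by positivity)).mpr (hb n)

lemma digit_sum_nonneg (s : ℕ) (b : ℕ → ℕ) : 0 ≤ ∑' n, (b n:ℝ)/s^(n+1) := by
  apply tsum_nonneg; intro n; positivity

lemma cast_sub_one (s : ℕ) (hs : 2 ≤ s) : ((s-1 : ℕ):ℝ) = (s:ℝ)-1 := by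
  push_cast [Nat.cast_sub (le_trans one_le_two hs)]; ring

lemma digit_sum_le_one (s : ℕ) (hs : 2 ≤ s) (b : ℕ → ℕ) (hb : ∀ n, (b n:ℝ) ≤ (s:ℝ)-1) :
    ∑' n, (b n:ℝ)/s^(n+1) ≤ 1 := by
  have hpos : (0:ℝ) < s := lt_trans one_pos (hs1 s hs)
  rw [← geom_one s hs]
  refine Summable.tsum_le_tsum (fun n => (div_le_div_iff_of_pos_right (by positivity)).mpr (hb n))
    (summable_digits s hs b hb) ?_
  have := summable_digits s hs (fun _ => s-1) (fun n => by rw [cast_sub_one s hs])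
  simpa [cast_sub_one s hs] using this

lemma tail_geom (s : ℕ) (hs : 2 ≤ s) (N : ℕ) :
    ∑' k:ℕ, ((s:ℝ)-1)/s^(N+k+1) = 1/s^N := by
  have h1 := hs1 s hs
  have hpos : (0:ℝ) < s := lt_trans one_pos h1
  have he : ∀ k:ℕ, ((s:ℝ)-1)/s^(N+k+1) = (((s:ℝ)-1)/s^(N+1)) * (1/s)^k := by
    intro k
    rw [div_pow, one_pow, div_mul_div_comm, mul_one, ← pow_add]
    ring_nf
  rw [tsum_congr he, tsum_mul_left, tsum_geometric_of_lt_one (by positivity)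
    (by rw [div_lt_one hpos]; exact h1)]
  have e1 : (1:ℝ) - 1/s = ((s:ℝ)-1)/s := by field_simp
  rw [e1, pow_succ]
  have hne : (s:ℝ)-1 ≠ 0 := by linarith
  field_simp

lemma floor_mul_bounds (s : ℕ) (hs : 2 ≤ s) (t : ℝ) :
    (s:ℤ) * ⌊t⌋ ≤ ⌊(s:ℝ)*t⌋ ∧ ⌊(s:ℝ)*t⌋ ≤ (s:ℤ)*⌊t⌋ + (s-1) := by
  have hpos : (0:ℝ) < s := lt_trans one_pos (hs1 s hs)
  constructor
  · apply Int.le_floor.mpr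
    push_cast
    exact mul_le_mul_of_nonneg_left (Int.floor_le t) (le_of_lt hpos)
  · have : ⌊(s:ℝ)*t⌋ < (s:ℤ)*⌊t⌋ + s := by
      apply Int.floor_lt.mpr
      push_cast
      have := Int.lt_floor_add_one t
      calc (s:ℝ)*t < s*(⌊t⌋+1) := by
            exact mul_lt_mul_of_pos_left this hpos
        _ = s*⌊t⌋ + s := by ring
    omega

lemma expansion (s : ℕ) (hs : 2 ≤ s) (x : ℝ) (hx0 : 0 ≤ x) (hx1 : x < 1) :
    ∃ a : ℕ → ℕ, (∀ n, a n ≤ s-1) ∧ (¬∃ N, ∀ n ≥ N, a n = s-1) ∧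
      x = ∑' n, (a n:ℝ)/s^(n+1) := by
  have h1 := hs1 s hs
  have hpos : (0:ℝ) < s := lt_trans one_pos h1
  set a : ℕ → ℕ := fun n => (⌊x * s^(n+1)⌋ - s * ⌊x * s^n⌋).toNat with ha
  have hnn : ∀ n, (0:ℤ) ≤ ⌊x * s^(n+1)⌋ - s * ⌊x * s^n⌋ := by
    intro n
    have := (floor_mul_bounds s hs (x * s^n)).1
    have he : (s:ℝ) * (x * s^n) = x * s^(n+1) := by ring
    rw [he] at this
    omega
  have hub : ∀ n, a n ≤ s - 1 := by
    intro n
    have h2 := (floor_mul_bounds s hs (x * s^n)).2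
    have he : (s:ℝ) * (x * s^n) = x * s^(n+1) := by ring
    rw [he] at h2
    have := hnn n
    simp only [ha]
    omega
  have hcast : ∀ n, (a n : ℝ) = (⌊x * s^(n+1)⌋ : ℝ) - s * ⌊x * s^n⌋ := by
    intro n
    have h : ((a n : ℕ) : ℤ) = ⌊x * s^(n+1)⌋ - s * ⌊x * s^n⌋ := by
      simp only [ha]; exact Int.toNat_of_nonneg (hnn n)
    have h2 : ((a n : ℕ) : ℝ) = ((⌊x * s^(n+1)⌋ - s * ⌊x * s^n⌋ : ℤ) : ℝ) := by
      exact_mod_cast congrArg (Int.cast : ℤ → ℝ) h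
    rw [h2]; push_cast; ring
  have hterm : ∀ n, (a n:ℝ)/s^(n+1) = (⌊x * s^(n+1)⌋:ℝ)/s^(n+1) - (⌊x * s^n⌋:ℝ)/s^n := by
    intro n
    rw [hcast n, sub_div]
    congr 1
    rw [pow_succ, mul_comm ((s:ℝ)^n), mul_div_mul_left _ _ (ne_of_gt hpos)]
  have hpartial : ∀ N, ∑ n ∈ Finset.range N, (a n:ℝ)/s^(n+1) = (⌊x * s^N⌋:ℝ)/s^N := by
    intro N
    have := Finset.sum_range_sub (fun n => (⌊x * s^n⌋:ℝ)/s^n) N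
    calc ∑ n ∈ Finset.range N, (a n:ℝ)/s^(n+1)
        = ∑ n ∈ Finset.range N, ((⌊x * s^(n+1)⌋:ℝ)/s^(n+1) - (⌊x * s^n⌋:ℝ)/s^n) :=
          Finset.sum_congr rfl (fun n _ => hterm n)
      _ = (⌊x * s^N⌋:ℝ)/s^N - (⌊x * s^0⌋:ℝ)/s^0 := this
      _ = (⌊x * s^N⌋:ℝ)/s^N := by
          simp [Int.floor_eq_zero_iff.mpr ⟨hx0, hx1⟩]
  have hbR : ∀ n, (a n : ℝ) ≤ (s:ℝ) - 1 := by
    intro n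
    have := hub n
    have : (a n : ℝ) ≤ ((s-1:ℕ):ℝ) := by exact_mod_cast this
    rwa [cast_sub_one s hs] at this
  have hsum := summable_digits s hs a hbR
  -- partial sums tend to x
  have hlim : Filter.Tendsto (fun N => ∑ n ∈ Finset.range N, (a n:ℝ)/s^(n+1))
      Filter.atTop (nhds x) := by
    rw [show (fun N => ∑ n ∈ Finset.range N, (a n:ℝ)/s^(n+1)) =
      (fun N => (⌊x * s^N⌋:ℝ)/s^N) from funext hpartial]
    have h0 : Filter.Tendsto (fun N:ℕ => (1/s:ℝ)^N) Filter.atTop (nhds 0) :=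
      tendsto_pow_atTop_nhds_zero_of_lt_one (by positivity)
        (by rw [div_lt_one hpos]; exact h1)
    have hge : ∀ N, x - (1/s:ℝ)^N ≤ (⌊x * s^N⌋:ℝ)/s^N := by
      intro N
      have hsN : (0:ℝ) < (s:ℝ)^N := by positivity
      have h3 : x * s^N < (⌊x * s^N⌋:ℝ) + 1 := Int.lt_floor_add_one _
      have h4 : x ≤ ((⌊x * s^N⌋:ℝ) + 1)/s^N := by
        rw [le_div_iff₀ hsN]; linarith
      calc x - (1/s:ℝ)^N ≤ ((⌊x * s^N⌋:ℝ) + 1)/s^N - (1/s:ℝ)^N := by linarith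
        _ = (⌊x * s^N⌋:ℝ)/s^N := by rw [div_pow, one_pow]; ring
    have hle : ∀ N, (⌊x * s^N⌋:ℝ)/s^N ≤ x := by
      intro N
      have hsN : (0:ℝ) < (s:ℝ)^N := by positivity
      rw [div_le_iff₀ hsN]
      exact Int.floor_le _
    have hxlim : Filter.Tendsto (fun N:ℕ => x - (1/s:ℝ)^N) Filter.atTop (nhds x) := by
      simpa using (tendsto_const_nhds (x := x)).sub h0
    exact tendsto_of_tendsto_of_tendsto_of_le_of_le hxlim tendsto_const_nhds hge hle
  have heq : x = ∑' n, (a n:ℝ)/s^(n+1) :=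
    tendsto_nhds_unique hlim hsum.hasSum.tendsto_sum_nat
  refine ⟨a, hub, ?_, heq⟩
  -- admissibility
  rintro ⟨N, hN⟩
  have hsplit := (Summable.sum_add_tsum_nat_add (f := fun n => (a n:ℝ)/s^(n+1)) N hsum).symm
  have htail : ∑' k:ℕ, (a (k+N):ℝ)/s^((k+N)+1) = 1/s^N := by
    rw [← tail_geom s hs N]
    apply tsum_congr
    intro k
    rw [hN (k+N) (Nat.le_add_left _ _), cast_sub_one s hs]
    ring_nf
  rw [hpartial N, htail] at hsplit
  rw [hsplit] at heq
  -- x = ⌊x s^N⌋/s^N + 1/s^N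
  have hsN : (0:ℝ) < (s:ℝ)^N := by positivity
  have : x * s^N = (⌊x * s^N⌋:ℝ) + 1 := by
    field_simp at heq
    linarith [heq]
  have h2 := Int.sub_one_lt_floor (x * s^N)
  linarith

noncomputable def eSeq (s : ℕ) : ℕ → ℝ := fun n => if Even n then ((s:ℝ)-1)/s^(n+1) else 0

def tw (s : ℕ) (b : ℕ → ℕ) : ℕ → ℕ := fun n => if Even n then s-1-b n else b n

lemma tw_le (s : ℕ) (b : ℕ → ℕ) (hb : ∀ n, b n ≤ s-1) : ∀ n, tw s b n ≤ s-1 := by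
  intro n; have := hb n; unfold tw; split <;> omega

lemma tw_tw (s : ℕ) (b : ℕ → ℕ) (hb : ∀ n, b n ≤ s-1) : tw s (tw s b) = b := by
  funext n; unfold tw; split <;> [skip; rfl]
  have := hb n; omega

lemma summable_eSeq (s : ℕ) (hs : 2 ≤ s) : Summable (eSeq s) := by
  have h1 := hs1 s hs
  have hpos : (0:ℝ) < s := lt_trans one_pos h1
  have hg : Summable (fun n:ℕ => (((s:ℝ)-1)/s) * (1/s)^n) :=
    (summable_geometric_of_lt_one (by positivity)
      (by rw [div_lt_one hpos]; exact h1)).mul_left _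
  refine hg.of_nonneg_of_le (fun n => ?_) (fun n => ?_) <;> unfold eSeq
  · split
    · exact div_nonneg (by linarith) (by positivity)
    · exact le_refl 0
  · split
    · rw [← term_eq s hs]
    · exact mul_nonneg (div_nonneg (by linarith) (by linarith)) (by positivity)

lemma tsum_eSeq (s : ℕ) (hs : 2 ≤ s) : ∑' n, eSeq s n = (s:ℝ)/(s+1) := by
  have h1 := hs1 s hs
  have hpos : (0:ℝ) < s := lt_trans one_pos h1
  have he : Summable (fun k:ℕ => eSeq s (2*k)) :=
    (summable_eSeq s hs).comp_injective
      (fun a b hab => by have : 2*a = 2*b := hab; omega)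
  have ho : Summable (fun k:ℕ => eSeq s (2*k+1)) :=
    (summable_eSeq s hs).comp_injective
      (fun a b hab => by have : 2*a+1 = 2*b+1 := hab; omega)
  have key := tsum_even_add_odd he ho
  have he2 : ∀ k:ℕ, eSeq s (2*k) = (((s:ℝ)-1)/s) * ((1/s^2):ℝ)^k := by
    intro k
    unfold eSeq
    rw [if_pos (even_two_mul k)]
    rw [div_pow, one_pow, div_mul_div_comm, mul_one, ← pow_mul, ← pow_succ']
  have ho2 : ∀ k:ℕ, eSeq s (2*k+1) = 0 := by
    intro k; unfold eSeq; rw [if_neg (by simp [Nat.even_add_one, parity_simps])]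
  rw [tsum_congr he2, tsum_congr ho2] at key
  rw [tsum_mul_left, tsum_geometric_of_lt_one (by positivity)
    (by rw [div_lt_one (by positivity)]; nlinarith), tsum_zero, add_zero] at key
  rw [← key]
  have h2 : (1:ℝ) - 1/s^2 = ((s:ℝ)^2-1)/s^2 := by field_simp
  rw [h2]
  have h3 : ((s:ℝ)^2-1) ≠ 0 := by nlinarith
  field_simp
  ring

lemma digitsR (s : ℕ) (hs : 2 ≤ s) (b : ℕ → ℕ) (hb : ∀ n, b n ≤ s-1) :
    ∀ n, (b n:ℝ) ≤ (s:ℝ)-1 := by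
  intro n
  calc (b n:ℝ) ≤ ((s-1:ℕ):ℝ) := Nat.cast_le.mpr (hb n)
    _ = (s:ℝ)-1 := cast_sub_one s hs

lemma alt_eq (s : ℕ) (hs : 2 ≤ s) (b : ℕ → ℕ) (hb : ∀ n, b n ≤ s-1) :
    ∑' n, (-1:ℝ)^(n+1) * (b n:ℝ)/s^(n+1) =
      (∑' n, (tw s b n:ℝ)/s^(n+1)) - (s:ℝ)/(s+1) := by
  have hterm : ∀ n, (-1:ℝ)^(n+1) * (b n:ℝ)/s^(n+1) = (tw s b n:ℝ)/s^(n+1) - eSeq s n := by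
    intro n
    unfold tw eSeq
    by_cases h : Even n
    · rw [if_pos h, if_pos h]
      have hpow : (-1:ℝ)^(n+1) = -1 := (Even.add_one h).neg_one_pow
      have hc : ((s-1-b n:ℕ):ℝ) = (s:ℝ)-1-(b n:ℝ) := by
        rw [Nat.cast_sub (hb n), cast_sub_one s hs]
      rw [hpow, hc]; ring
    · rw [if_neg h, if_neg h]
      have hpow : (-1:ℝ)^(n+1) = 1 := (Nat.even_add_one.mpr h).neg_one_pow
      rw [hpow]; ring
  rw [tsum_congr hterm,
    Summable.tsum_sub (summable_digits s hs _ (digitsR s hs _ (fun n => by unfold tw; have := hb n; split <;> omega)))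
      (summable_eSeq s hs), tsum_eSeq s hs]

lemma sum_lt_one (s : ℕ) (hs : 2 ≤ s) (b : ℕ → ℕ) (hb : ∀ n, b n ≤ s-1)
    (m : ℕ) (hm : b m ≠ s-1) : ∑' n, (b n:ℝ)/s^(n+1) < 1 := by
  have h1 := hs1 s hs
  have hpos : (0:ℝ) < s := lt_trans one_pos h1
  have hsm : (0:ℝ) < (s:ℝ)^(m+1) := by positivity
  set G : ℕ → ℝ := fun n => ((s:ℝ)-1)/s^(n+1) - (if n = m then 1/(s:ℝ)^(m+1) else 0) with hG
  have hGsummable : Summable G := by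
    apply Summable.sub
    · have := summable_digits s hs (fun _ => s-1) (digitsR s hs _ (fun _ => le_refl _))
      simpa [cast_sub_one s hs] using this
    · exact summable_of_finite_support (by
        apply Set.Finite.subset (Set.finite_singleton m)
        intro n hn
        simp only [Function.mem_support] at hn
        by_contra h
        simp only [Set.mem_singleton_iff] at h
        exact hn (if_neg h))
  have hGsum : ∑' n, G n = 1 - 1/(s:ℝ)^(m+1) := by
    rw [hG]
    rw [Summable.tsum_sub (by
      have := summable_digits s hs (fun _ => s-1) (digitsR s hs _ (fun _ => le_refl _))
      simpa [cast_sub_one s hs] using this) (by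
      exact summable_of_finite_support (by
        apply Set.Finite.subset (Set.finite_singleton m)
        intro n hn
        simp only [Function.mem_support] at hn
        by_contra h
        simp only [Set.mem_singleton_iff] at h
        exact hn (if_neg h)))]
    rw [geom_one s hs, tsum_ite_eq]
  have hle : ∑' n, (b n:ℝ)/s^(n+1) ≤ ∑' n, G n := by
    refine Summable.tsum_le_tsum (fun n => ?_) (summable_digits s hs b (digitsR s hs b hb)) hGsummable
    simp only [hG]
    by_cases h : n = m
    · subst h
      rw [if_pos rfl]
      have hb2 : b n ≤ s - 2 := by have := hb n; omega
      have hble : (b n:ℝ) ≤ (s:ℝ) - 2 := by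
        calc (b n:ℝ) ≤ ((s-2:ℕ):ℝ) := Nat.cast_le.mpr hb2
          _ = (s:ℝ)-2 := by push_cast [Nat.cast_sub hs]; ring
      rw [div_sub_div_same]
      refine (div_le_div_iff_of_pos_right (by positivity)).mpr (by linarith)
    · rw [if_neg h, sub_zero]
      exact (div_le_div_iff_of_pos_right (by positivity)).mpr (digitsR s hs b hb n)
  calc ∑' n, (b n:ℝ)/s^(n+1) ≤ 1 - 1/(s:ℝ)^(m+1) := hGsum ▸ hle
    _ < 1 := by
      have : (0:ℝ) < 1/(s:ℝ)^(m+1) := by positivity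
      linarith

lemma expansion01 (s : ℕ) (hs : 2 ≤ s) (x : ℝ) (hx0 : 0 ≤ x) (hx1 : x ≤ 1) :
    ∃ c : ℕ → ℕ, (∀ n, c n ≤ s-1) ∧ x = ∑' n, (c n:ℝ)/s^(n+1) := by
  rcases lt_or_eq_of_le hx1 with h | h
  · obtain ⟨a, h1, _, h3⟩ := expansion s hs x hx0 h
    exact ⟨a, h1, h3⟩
  · refine ⟨fun _ => s-1, fun _ => le_refl _, ?_⟩
    rw [h, ← geom_one s hs]
    exact tsum_congr (fun n => by rw [cast_sub_one s hs])

lemma bad_countable (s : ℕ) : {b : ℕ → ℕ | ∃ N, ∀ n ≥ N, b n = s-1}.Countable := by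
  have hsub : {b : ℕ → ℕ | ∃ N, ∀ n ≥ N, b n = s-1} ⊆
      ⋃ N : ℕ, Set.range (fun v : Fin N → ℕ => fun n => if h : n < N then v ⟨n, h⟩ else s-1) := by
    rintro b ⟨N, hN⟩
    refine Set.mem_iUnion.mpr ⟨N, ⟨fun i => b i, ?_⟩⟩
    funext n
    by_cases h : n < N
    · simp [h]
    · simp [h, hN n (le_of_not_gt h)]
  exact Set.Countable.mono hsub (Set.countable_iUnion (fun N => Set.countable_range _))

/-- Paper's Lemma 3, first property, for the function `f₊`: `f₊` maps `[0,1)`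
into `[−s/(s+1), 1/(s+1)]`, and the set of points of `[−s/(s+1), 1/(s+1)]` not
in the image is countable. -/
theorem stmt_3 (s : ℕ) (hs : 2 ≤ s) (g : ℝ → ℝ)
    (hg : ∀ a : ℕ → ℕ, (∀ n, a n ≤ s - 1) → (¬ ∃ N, ∀ n ≥ N, a n = s - 1) →
      g (∑' n : ℕ, (a n : ℝ) / (s : ℝ) ^ (n + 1)) =
        ∑' n : ℕ, (-1 : ℝ) ^ (n + 1) * (a n : ℝ) / (s : ℝ) ^ (n + 1)) :
    g '' Set.Ico 0 1 ⊆ Set.Icc (-(s : ℝ) / ((s : ℝ) + 1)) (1 / ((s : ℝ) + 1)) ∧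
    (Set.Icc (-(s : ℝ) / ((s : ℝ) + 1)) (1 / ((s : ℝ) + 1)) \ g '' Set.Ico 0 1).Countable := by
  have h1 := hs1 s hs
  have hpos : (0:ℝ) < s := lt_trans one_pos h1
  have hs1pos : (0:ℝ) < (s:ℝ) + 1 := by linarith
  have hkey : (1:ℝ)/((s:ℝ)+1) + (s:ℝ)/((s:ℝ)+1) = 1 := by
    rw [← add_div, add_comm, div_self (ne_of_gt hs1pos)]
  constructor
  · rintro y ⟨x, hx, rfl⟩
    obtain ⟨a, ha1, ha2, ha3⟩ := expansion s hs x hx.1 hx.2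
    rw [ha3, hg a ha1 ha2, alt_eq s hs a ha1]
    have h0 := digit_sum_nonneg s (tw s a)
    have hle := digit_sum_le_one s hs (tw s a) (digitsR s hs _ (tw_le s a ha1))
    constructor
    · rw [neg_div]; linarith
    · linarith
  · -- countable part
    set H : (ℕ → ℕ) → ℝ := fun b => ∑' n, (-1:ℝ)^(n+1) * (b n:ℝ)/s^(n+1) with hH
    have hsub : Set.Icc (-(s:ℝ)/((s:ℝ)+1)) (1/((s:ℝ)+1)) \ g '' Set.Ico 0 1 ⊆
        H '' {b : ℕ → ℕ | ∃ N, ∀ n ≥ N, b n = s-1} := by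
      rintro y ⟨⟨hy1, hy2⟩, hyn⟩
      rw [neg_div] at hy1
      set z := y + (s:ℝ)/((s:ℝ)+1) with hz
      have hz0 : 0 ≤ z := by rw [hz]; linarith
      have hz1 : z ≤ 1 := by rw [hz]; linarith
      obtain ⟨c, hc1, hc2⟩ := expansion01 s hs z hz0 hz1
      set b := tw s c with hb
      have hb1 : ∀ n, b n ≤ s-1 := tw_le s c hc1
      have htwtw : tw s b = c := tw_tw s c hc1
      have hHb : H b = y := by
        rw [hH]
        show ∑' n, (-1:ℝ)^(n+1) * (b n:ℝ)/s^(n+1) = y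
        rw [alt_eq s hs b hb1, htwtw, ← hc2, hz]
        ring
      by_cases hadm : ∃ N, ∀ n ≥ N, b n = s-1
      · exact ⟨b, hadm, hHb⟩
      · exfalso
        apply hyn
        have h' := hadm
        push_neg at h'
        obtain ⟨m, _, hm⟩ := h' 0
        refine ⟨∑' n, (b n:ℝ)/s^(n+1),
          ⟨digit_sum_nonneg s b, sum_lt_one s hs b hb1 m hm⟩, ?_⟩
        rw [hg b hb1 hadm]
        exact hHb
    exact Set.Countable.mono hsub ((bad_countable s).image H)
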